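/- Let c > 0 and s₀ ∈ (0, 1), and let ψ : (0, s₀) → (0, ∞) be a continuously differentiable function that is increasing and convex (i.e., ψ' ≥ 0 and ψ' is nondecreasing), and suppose ψ(s)·√(−log s)/s → c as s → 0⁺. Then ψ'(s)·√(−log s) → c as s → 0⁺. -/

import Mathlib

open Real Set Filter

/-- `√(-log s)/√(-log (a s)) → 1` as `s → 0⁺`, for fixed `a > 0`. -/
lemma sqrt_log_ratio (a : ℝ) (ha : 0 < a) :
    Tendsto (fun s : ℝ => Real.sqrt (-Real.log s) / Real.sqrt (-Real.log (a*s)))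
      (nhdsWithin 0 (Ioi 0)) (nhds 1) := by
  have hlog : Tendsto (fun s : ℝ => -Real.log s) (nhdsWithin 0 (Ioi 0)) atTop :=
    tendsto_neg_atBot_atTop.comp Real.tendsto_log_nhdsGT_zero
  -- t/(t - log a) → 1 at atTop
  have h1 : Tendsto (fun t : ℝ => (1 - Real.log a / t)⁻¹) atTop (nhds 1) := by
    have h0 : Tendsto (fun t : ℝ => Real.log a / t) atTop (nhds 0) :=
      tendsto_const_nhds.div_atTop tendsto_id
    have := ((tendsto_const_nhds (x := (1:ℝ))).sub h0).inv₀ (by norm_num)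
    simpa using this
  have h2 : Tendsto (fun t : ℝ => t / (t - Real.log a)) atTop (nhds 1) := by
    refine h1.congr' ?_
    filter_upwards [eventually_gt_atTop (max 0 (Real.log a))] with t ht
    have ht0 : t ≠ 0 := ne_of_gt (lt_of_le_of_lt (le_max_left _ _) ht)
    have ht1 : t - Real.log a ≠ 0 :=
      ne_of_gt (by linarith [lt_of_le_of_lt (le_max_right 0 (Real.log a)) ht])
    field_simp
  have h3 : Tendsto (fun s : ℝ => (-Real.log s) / (-Real.log s - Real.log a))
      (nhdsWithin 0 (Ioi 0)) (nhds 1) := h2.comp hlog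
  have h4 : Tendsto (fun s : ℝ => Real.sqrt ((-Real.log s) / (-Real.log s - Real.log a)))
      (nhdsWithin 0 (Ioi 0)) (nhds 1) := by
    have := (Real.continuous_sqrt.tendsto 1).comp h3
    simpa [Function.comp_def] using this
  refine h4.congr' ?_
  filter_upwards [Ioo_mem_nhdsGT_of_mem (Set.left_mem_Ico.2 zero_lt_one)] with s hs
  have hs0 : (0:ℝ) < s := hs.1
  have hls : 0 ≤ -Real.log s := by
    have := Real.log_nonpos hs0.le hs.2.le
    linarith
  have hlog2 : Real.log (a*s) = Real.log a + Real.log s := Real.log_mul (ne_of_gt ha) (ne_of_gt hs0)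
  rw [Real.sqrt_div hls, hlog2]
  congr 2
  ring

/-- Differentiating the neckpinch asymptotics: if `ψ` is `C¹`, positive, increasing and
convex on `(0, s₀)` with `ψ(s)√(-log s)/s → c` as `s → 0⁺`, then
`ψ'(s)√(-log s) → c` as `s → 0⁺`. -/
theorem stmt19 (c : ℝ) (hc : 0 < c) (s₀ : ℝ) (hs₀ : s₀ ∈ Ioo (0:ℝ) 1)
    (ψ : ℝ → ℝ)
    (hψ : ContDiffOn ℝ 1 ψ (Ioo 0 s₀))
    (hpos : ∀ x ∈ Ioo (0:ℝ) s₀, 0 < ψ x)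
    (hd : ∀ x ∈ Ioo (0:ℝ) s₀, 0 ≤ deriv ψ x)
    (hconv : MonotoneOn (deriv ψ) (Ioo 0 s₀))
    (hasymp : Tendsto (fun x => ψ x * Real.sqrt (-Real.log x) / x)
      (nhdsWithin 0 (Ioi 0)) (nhds c)) :
    Tendsto (fun x => deriv ψ x * Real.sqrt (-Real.log x))
      (nhdsWithin 0 (Ioi 0)) (nhds c) := by
  obtain ⟨hs₀0, hs₀1⟩ := hs₀
  set f : ℝ → ℝ := fun x => ψ x * Real.sqrt (-Real.log x) / x with hf
  -- composition lemma
  have hcomp : ∀ a : ℝ, 0 < a →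
      Tendsto (fun s => f (a*s)) (nhdsWithin 0 (Ioi 0)) (nhds c) := by
    intro a ha
    refine hasymp.comp ?_
    rw [tendsto_nhdsWithin_iff]
    constructor
    · have : Tendsto (fun s : ℝ => a*s) (nhds 0) (nhds (a*0)) :=
        (continuous_const.mul continuous_id).tendsto 0
      simpa using this.mono_left nhdsWithin_le_nhds
    · filter_upwards [eventually_mem_nhdsWithin] with s (hs : s ∈ Ioi (0:ℝ))
      exact mul_pos ha hs
  have hup : Tendsto (fun s => (ψ (2*s) - ψ s) / s * Real.sqrt (-Real.log s))
      (nhdsWithin 0 (Ioi 0)) (nhds c) := by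
    have h := ((tendsto_const_nhds (x := (2:ℝ))).mul (hcomp 2 two_pos)).mul
      (sqrt_log_ratio 2 two_pos) |>.sub hasymp
    have he : (2 * c * 1 - c) = c := by ring
    rw [he] at h
    refine h.congr' ?_
    filter_upwards [Ioo_mem_nhdsGT_of_mem (Set.left_mem_Ico.2 (by norm_num : (0:ℝ) < 1/2))]
      with s hs
    have hs0 : (0:ℝ) < s := hs.1
    have h2s : 2*s < 1 := by linarith [hs.2]
    have hpos2 : 0 < -Real.log (2*s) := by
      have := Real.log_neg (by positivity) h2s
      linarith
    have hne : Real.sqrt (-Real.log (2*s)) ≠ 0 := ne_of_gt (Real.sqrt_pos.2 hpos2)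
    have hsne : s ≠ 0 := ne_of_gt hs0
    have h2sne : (2:ℝ)*s ≠ 0 := by positivity
    have key : ψ (2*s) * Real.sqrt (-Real.log (2*s)) / (2*s) *
        (Real.sqrt (-Real.log s) / Real.sqrt (-Real.log (2*s)))
        = ψ (2*s) * Real.sqrt (-Real.log s) / (2*s) := by
      rw [div_mul_div_comm, mul_right_comm, mul_div_mul_right _ _ hne]
    simp only [hf]
    rw [mul_assoc, key]
    field_simp
  have hlo : Tendsto (fun s => (ψ s - ψ (s/2)) / (s/2) * Real.sqrt (-Real.log s))
      (nhdsWithin 0 (Ioi 0)) (nhds c) := by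
    have hhalf : (0:ℝ) < 1/2 := by norm_num
    have h := ((tendsto_const_nhds (x := (2:ℝ))).mul hasymp).sub
      ((hcomp (1/2) hhalf).mul (sqrt_log_ratio (1/2) hhalf))
    have he : (2 * c - c * 1) = c := by ring
    rw [he] at h
    refine h.congr' ?_
    filter_upwards [Ioo_mem_nhdsGT_of_mem (Set.left_mem_Ico.2 zero_lt_one)] with s hs
    have hs0 : (0:ℝ) < s := hs.1
    have hhs : (1/2)*s < 1 := by linarith [hs.2]
    have hpos2 : 0 < -Real.log ((1/2)*s) := by
      have := Real.log_neg (by positivity) hhs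
      linarith
    have hne : Real.sqrt (-Real.log ((1/2)*s)) ≠ 0 := ne_of_gt (Real.sqrt_pos.2 hpos2)
    have hsne : s ≠ 0 := ne_of_gt hs0
    have hsd' : (1/2)*s = s/2 := by ring
    have hne2 : Real.sqrt (-Real.log (s/2)) ≠ 0 := by rw [← hsd']; exact hne
    have hhne : s/2 ≠ 0 := by positivity
    have key : ψ (s/2) * Real.sqrt (-Real.log (s/2)) / (s/2) *
        (Real.sqrt (-Real.log s) / Real.sqrt (-Real.log (s/2)))
        = ψ (s/2) * Real.sqrt (-Real.log s) / (s/2) := by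
      rw [div_mul_div_comm, mul_right_comm, mul_div_mul_right _ _ hne2]
    simp only [hf, hsd']
    rw [key]
    field_simp
  -- squeeze
  refine tendsto_of_tendsto_of_tendsto_of_le_of_le' hlo hup ?_ ?_
  · filter_upwards [Ioo_mem_nhdsGT_of_mem
      (Set.left_mem_Ico.2 (by positivity : (0:ℝ) < s₀/2))] with s hs
    have hs0 : (0:ℝ) < s := hs.1
    have hmem : s ∈ Ioo (0:ℝ) s₀ := ⟨hs0, by linarith [hs.2]⟩
    have hsub : Icc (s/2) s ⊆ Ioo (0:ℝ) s₀ := by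
      intro x hx
      exact ⟨by linarith [hx.1], by linarith [hx.2, hs.2]⟩
    obtain ⟨ξ, hξ, hξd⟩ := exists_deriv_eq_slope ψ (by linarith : s/2 < s)
      (hψ.continuousOn.mono hsub)
      ((hψ.differentiableOn one_ne_zero).mono ((Ioo_subset_Icc_self).trans hsub))
    have hξmem : ξ ∈ Ioo (0:ℝ) s₀ := hsub (Ioo_subset_Icc_self hξ)
    have hmono : deriv ψ ξ ≤ deriv ψ s := hconv hξmem hmem hξ.2.le
    have : (ψ s - ψ (s/2)) / (s/2) = deriv ψ ξ := by
      rw [hξd]; congr 1; ring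
    rw [this]
    exact mul_le_mul_of_nonneg_right hmono (Real.sqrt_nonneg _)
  · filter_upwards [Ioo_mem_nhdsGT_of_mem
      (Set.left_mem_Ico.2 (by positivity : (0:ℝ) < s₀/2))] with s hs
    have hs0 : (0:ℝ) < s := hs.1
    have hmem : s ∈ Ioo (0:ℝ) s₀ := ⟨hs0, by linarith [hs.2]⟩
    have hsub : Icc s (2*s) ⊆ Ioo (0:ℝ) s₀ := by
      intro x hx
      exact ⟨by linarith [hx.1], by linarith [hx.2, hs.2]⟩
    obtain ⟨ξ, hξ, hξd⟩ := exists_deriv_eq_slope ψ (by linarith : s < 2*s)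
      (hψ.continuousOn.mono hsub)
      ((hψ.differentiableOn one_ne_zero).mono ((Ioo_subset_Icc_self).trans hsub))
    have hξmem : ξ ∈ Ioo (0:ℝ) s₀ := hsub (Ioo_subset_Icc_self hξ)
    have hmono : deriv ψ s ≤ deriv ψ ξ := hconv hmem hξmem hξ.1.le
    have : (ψ (2*s) - ψ s) / s = deriv ψ ξ := by
      rw [hξd]; congr 1; ring
    rw [this]
    exact mul_le_mul_of_nonneg_right hmono (Real.sqrt_nonneg _)
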